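/- The family TL with the state operations is the free model of the parameterized theory of single-bit mutable state with local values (equations (5)–(7)) on generators A: for every model Y (a family Y : ℕ → Type with operations putY, getY, localY, closeY satisfying the listed equations including putY (n+1) i (closeY n z) = closeY n z) and every function f : A → Y 0, there exists a unique family of functions h : ∀ n, TL n → Y n such that h 0 (fun s => (a, s)) = f a for all a : A, and h is a homomorphism: h n (putT n i u) = putY n i (h n u); h n (getT n u v) = getY n (h n u) (h n v); h n (localT n i w) = localY n i (h (n+1) w); and h (n+1) (closeT n u) = closeY n (h n u). -/

import Mathlib

namespace Stmt6

/-- `TL A 0 = Bool → A × Bool` and `TL A (n+1) = Bool → TL A n`. -/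
def TL (A : Type) : ℕ → Type
  | 0 => Bool → A × Bool
  | n + 1 => Bool → TL A n

/-- `get` branches on the stored bit. -/
def getT (A : Type) : ∀ n, TL A n → TL A n → TL A n
  | 0, f, g => fun s => if s then g s else f s
  | _ + 1, f, g => fun s => if s then g s else f s

/-- `put i` overwrites the state with `i`. -/
def putT (A : Type) : ∀ n, Bool → TL A n → TL A n
  | 0, i, f => fun _ => f i
  | _ + 1, i, f => fun _ => f i

/-- `local i` opens a scope with local state initialized to `i`. -/
def localT (A : Type) (n : ℕ) (i : Bool) (f : TL A (n + 1)) : TL A n := f i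

/-- `close` closes a scope, discarding the local state. -/
def closeT (A : Type) (n : ℕ) (x : TL A n) : TL A (n + 1) := fun _ => x

/-- The canonical homomorphism out of `TL`. -/
def H (A : Type) (Y : ℕ → Type) (putY : ∀ n, Bool → Y n → Y n)
    (getY : ∀ n, Y n → Y n → Y n) (closeY : ∀ n, Y n → Y (n + 1))
    (f : A → Y 0) : ∀ n, TL A n → Y n
  | 0, u => getY 0 (putY 0 (u false).2 (f (u false).1)) (putY 0 (u true).2 (f (u true).1))
  | n + 1, u => getY (n + 1) (closeY n (H A Y putY getY closeY f n (u false)))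
      (closeY n (H A Y putY getY closeY f n (u true)))

lemma expand0 (A : Type) (u : TL A 0) :
    u = getT A 0 (putT A 0 (u false).2 (fun s => ((u false).1, s)))
          (putT A 0 (u true).2 (fun s => ((u true).1, s))) := by
  funext s
  cases s <;> rfl

lemma expandS (A : Type) (n : ℕ) (u : TL A (n + 1)) :
    u = getT A (n + 1) (closeT A n (u false)) (closeT A n (u true)) := by
  funext s
  cases s <;> rfl

/-- `TL` is the free model of the parameterized theory of single-bit mutable
state with local values (equations (5)–(7)) on generators `A`. -/
theorem stmt_6 (A : Type) (Y : ℕ → Type)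
    (putY : ∀ n, Bool → Y n → Y n)
    (getY : ∀ n, Y n → Y n → Y n)
    (localY : ∀ n, Bool → Y (n + 1) → Y n)
    (closeY : ∀ n, Y n → Y (n + 1))
    (get_put : ∀ n (z : Y n),
      getY n (putY n false z) (putY n true z) = z)
    (put_put : ∀ n (i j : Bool) (z : Y n),
      putY n i (putY n j z) = putY n j z)
    (put_get : ∀ n (i : Bool) (x0 x1 : Y n),
      putY n i (getY n x0 x1) = putY n i (if i then x1 else x0))
    (local_close : ∀ n (i : Bool) (x : Y n),
      localY n i (closeY n x) = x)
    (local_get : ∀ n (i : Bool) (x0 x1 : Y (n + 1)),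
      localY n i (getY (n + 1) x0 x1) = localY n i (if i then x1 else x0))
    (local_put : ∀ n (i j : Bool) (z : Y (n + 1)),
      localY n i (putY (n + 1) j z) = localY n j z)
    (put_close : ∀ n (i : Bool) (z : Y n),
      putY (n + 1) i (closeY n z) = closeY n z)
    (f : A → Y 0) :
    ∃! h : ∀ n, TL A n → Y n,
      (∀ a : A, h 0 (fun s => (a, s)) = f a) ∧
      (∀ n (i : Bool) (u : TL A n), h n (putT A n i u) = putY n i (h n u)) ∧
      (∀ n (u v : TL A n), h n (getT A n u v) = getY n (h n u) (h n v)) ∧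
      (∀ n (i : Bool) (w : TL A (n + 1)),
        h n (localT A n i w) = localY n i (h (n + 1) w)) ∧
      (∀ n (u : TL A n), h (n + 1) (closeT A n u) = closeY n (h n u)) := by
  -- derived laws
  have diag : ∀ n (x : Y n), getY n x x = x := by
    intro n x
    calc getY n x x
        = getY n (putY n false (getY n x x)) (putY n true (getY n x x)) :=
          (get_put n (getY n x x)).symm
      _ = getY n (putY n false x) (putY n true x) := by
          rw [put_get n false, put_get n true]; simp
      _ = x := get_put n x
  have gg : ∀ n (a b c d : Y n), getY n (getY n a b) (getY n c d) = getY n a d := by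
    intro n a b c d
    calc getY n (getY n a b) (getY n c d)
        = getY n (putY n false (getY n (getY n a b) (getY n c d)))
            (putY n true (getY n (getY n a b) (getY n c d))) :=
          (get_put n _).symm
      _ = getY n (putY n false a) (putY n true d) := by
          rw [put_get n false, put_get n true]
          simp only [if_true, if_false, Bool.false_eq_true, ite_false, ite_true]
          rw [put_get n false, put_get n true]
          simp
      _ = getY n (putY n false (getY n a d)) (putY n true (getY n a d)) := by
          rw [put_get n false, put_get n true]; simp
      _ = getY n a d := get_put n _
  set h : ∀ n, TL A n → Y n := H A Y putY getY closeY f with hh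
  have h0 : ∀ u : TL A 0, h 0 u =
      getY 0 (putY 0 (u false).2 (f (u false).1)) (putY 0 (u true).2 (f (u true).1)) := by
    intro u; rfl
  have hS : ∀ n (u : TL A (n + 1)), h (n + 1) u =
      getY (n + 1) (closeY n (h n (u false))) (closeY n (h n (u true))) := by
    intro n u; rfl
  have gen : ∀ a : A, h 0 (fun s => (a, s)) = f a := by
    intro a
    refine (h0 _).trans ?_
    simpa using get_put 0 (f a)
  have hput : ∀ n (i : Bool) (u : TL A n), h n (putT A n i u) = putY n i (h n u) := by
    intro n i u
    cases n with
    | zero =>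
        have l : h 0 (putT A 0 i u) = putY 0 (u i).2 (f (u i).1) := by
          rw [h0]
          show getY 0 (putY 0 (u i).2 (f (u i).1)) (putY 0 (u i).2 (f (u i).1)) = _
          exact diag 0 _
        rw [l, h0, put_get]
        cases i <;> simp [put_put]
    | succ n =>
        have l : h (n + 1) (putT A (n + 1) i u) = closeY n (h n (u i)) := by
          rw [hS]
          show getY (n + 1) (closeY n (h n (u i))) (closeY n (h n (u i))) = _
          exact diag (n + 1) _
        rw [l, hS, put_get]
        cases i <;> simp [put_close]
  have hget : ∀ n (u v : TL A n), h n (getT A n u v) = getY n (h n u) (h n v) := by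
    intro n u v
    cases n with
    | zero =>
        rw [h0 u, h0 v, gg]
        rw [h0]
        rfl
    | succ n =>
        rw [hS n u, hS n v, gg]
        rw [hS]
        rfl
  have hlocal : ∀ n (i : Bool) (w : TL A (n + 1)),
      h n (localT A n i w) = localY n i (h (n + 1) w) := by
    intro n i w
    rw [hS, local_get]
    cases i
    · simp only [Bool.false_eq_true, ite_false]
      rw [local_close]; rfl
    · simp only [ite_true]
      rw [local_close]; rfl
  have hclose : ∀ n (u : TL A n), h (n + 1) (closeT A n u) = closeY n (h n u) := by
    intro n u
    rw [hS]
    show getY (n + 1) (closeY n (h n u)) (closeY n (h n u)) = _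
    exact diag (n + 1) _
  refine ⟨h, ⟨gen, hput, hget, hlocal, hclose⟩, ?_⟩
  rintro g ⟨ggen, gput, gget, glocal, gclose⟩
  have key : ∀ n, ∀ u : TL A n, g n u = h n u := by
    intro n
    induction n with
    | zero =>
        intro u
        conv_lhs => rw [expand0 A u]
        rw [gget]
        exact (congrArg₂ (getY 0)
          ((gput 0 (u false).2 (fun s => ((u false).1, s))).trans (congrArg (putY 0 (u false).2) (ggen (u false).1)))
          ((gput 0 (u true).2 (fun s => ((u true).1, s))).trans (congrArg (putY 0 (u true).2) (ggen (u true).1)))).trans (h0 u).symm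
    | succ n ih =>
        intro u
        conv_lhs => rw [expandS A n u]
        rw [gget, gclose, gclose, ih, ih, hS]
  funext n u
  exact key n u

end Stmt6
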